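/- arXiv:1407.7379 — 2 statements merged into one kernel-verified Lean document; each statement's English description precedes it below -/
import Mathlib

section
/- A bounded function A : Z^d -> R that is discretely harmonic, i.e., (Laplacian_1 A)_i = 0 for all i in Z^d, is constant. -/
/-- Discrete Laplacian on `ℤ^d`. -/
noncomputable def discreteLap (d : ℕ) (w : (Fin d → ℤ) → ℝ) (i : Fin d → ℤ) : ℝ :=
  ∑ e : Fin d,
    ((w (Function.update i e (i e + 1)) - w i) +
     (w (Function.update i e (i e - 1)) - w i))

open Finset AddMonoidAlgebra
namespace DLiou
variable {d : ℕ}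
abbrev G (d : ℕ) := Fin d → ℤ
abbrev R (d : ℕ) := AddMonoidAlgebra ℝ (G d)

noncomputable def act (q : R d) (w : G d → ℝ) (i : G d) : ℝ :=
  Finsupp.linearCombination ℝ (fun x => w (i + x)) q.coeff
noncomputable def aug (q : R d) : ℝ := act q (fun _ => 1) 0
def Kpos (q : R d) : Prop := ∀ x, 0 ≤ q.coeff x

lemma act_single (x : G d) (c : ℝ) (w : G d → ℝ) (i : G d) :
    act (AddMonoidAlgebra.single x c) w i = c * w (i + x) := by simp [act, AddMonoidAlgebra.coeff_single]
lemma act_add (p q : R d) (w : G d → ℝ) (i : G d) :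
    act (p + q) w i = act p w i + act q w i := by simp [act, AddMonoidAlgebra.coeff_add]
lemma act_sub (p q : R d) (w : G d → ℝ) (i : G d) :
    act (p - q) w i = act p w i - act q w i := by simp [act, AddMonoidAlgebra.coeff_sub]
lemma act_zero (w : G d → ℝ) (i : G d) : act (0 : R d) w i = 0 := by simp [act]
lemma act_one (w : G d → ℝ) (i : G d) : act (1 : R d) w i = w i := by
  rw [AddMonoidAlgebra.one_def, act_single]; simp
lemma act_sum {α : Type*} (s : Finset α) (q : α → R d) (w : G d → ℝ) (i : G d) :
    act (∑ a ∈ s, q a) w i = ∑ a ∈ s, act (q a) w i := by simp [act, AddMonoidAlgebra.coeff_sum]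

lemma act_mul (p q : R d) (w : G d → ℝ) (i : G d) :
    act (p * q) w i = act p (fun j => act q w j) i := by
  induction p using AddMonoidAlgebra.induction_linear with
  | zero => simp [act]
  | add p p' hp hp' => rw [add_mul, act_add, act_add, hp, hp']
  | single a c =>
    induction q using AddMonoidAlgebra.induction_linear with
    | zero => simp [act]
    | add q q' hq hq' =>
      rw [mul_add, act_add, hq, hq']
      have : ∀ j, act (q + q') w j = act q w j + act q' w j := fun j => act_add ..
      simp only [this, act_single]
      ring
    | single b e =>
      rw [AddMonoidAlgebra.single_mul_single, act_single, act_single, act_single, add_assoc]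
      ring

lemma act_eq_sum (q : R d) (w : G d → ℝ) (i : G d) :
    act q w i = ∑ x ∈ q.coeff.support, q.coeff x * w (i + x) := by
  simp [act, Finsupp.linearCombination_apply, Finsupp.sum, smul_eq_mul]
lemma aug_eq_sum (q : R d) : aug q = ∑ x ∈ q.coeff.support, q.coeff x := by simp [aug, act_eq_sum]
lemma act_const (q : R d) (c : ℝ) (i : G d) : act q (fun _ => c) i = aug q * c := by
  rw [act_eq_sum, aug_eq_sum, Finset.sum_mul]
lemma act_smul_w (q : R d) (c : ℝ) (w : G d → ℝ) (i : G d) :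
    act q (fun j => c * w j) i = c * act q w i := by
  rw [act_eq_sum, act_eq_sum, Finset.mul_sum]
  exact Finset.sum_congr rfl fun x _ => by ring
lemma abs_act_le (q : R d) (hq : Kpos q) (w : G d → ℝ) (M : ℝ)
    (hw : ∀ j, |w j| ≤ M) (i : G d) : |act q w i| ≤ aug q * M := by
  rw [act_eq_sum, aug_eq_sum, Finset.sum_mul]
  refine (Finset.abs_sum_le_sum_abs _ _).trans (Finset.sum_le_sum fun x _ => ?_)
  rw [abs_mul, abs_of_nonneg (hq x)]
  exact mul_le_mul_of_nonneg_left (hw _) (hq x)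

lemma Kpos_single (x : G d) {c : ℝ} (hc : 0 ≤ c) : Kpos (AddMonoidAlgebra.single x c) := by
  intro y; rw [AddMonoidAlgebra.coeff_single, Finsupp.single_apply]; split <;> simp [hc]
lemma Kpos_add {p q : R d} (hp : Kpos p) (hq : Kpos q) : Kpos (p + q) := fun x =>
  add_nonneg (hp x) (hq x)
lemma Kpos_mul {p q : R d} (hp : Kpos p) (hq : Kpos q) : Kpos (p * q) := by
  classical
  intro x
  rw [AddMonoidAlgebra.coeff_mul]
  simp only [Finsupp.sum]
  refine Finset.sum_nonneg fun a _ => Finset.sum_nonneg fun b _ => ?_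
  split
  · exact mul_nonneg (hp a) (hq b)
  · exact le_refl 0
lemma Kpos_one : Kpos (1 : R d) := by
  rw [AddMonoidAlgebra.one_def]; exact Kpos_single 0 zero_le_one
lemma Kpos_pow {q : R d} (hq : Kpos q) (n : ℕ) : Kpos (q ^ n) := by
  induction n with
  | zero => simpa using Kpos_one
  | succ n ih => rw [pow_succ]; exact Kpos_mul ih hq
lemma Kpos_sum {α : Type*} (s : Finset α) (q : α → R d) (hq : ∀ a ∈ s, Kpos (q a)) :
    Kpos (∑ a ∈ s, q a) := by
  intro x
  rw [AddMonoidAlgebra.coeff_sum, Finsupp.finset_sum_apply]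
  exact Finset.sum_nonneg fun a ha => hq a ha x

lemma aug_single (x : G d) (c : ℝ) : aug (AddMonoidAlgebra.single x c) = c := by
  simp [aug, act_single]
lemma aug_add (p q : R d) : aug (p + q) = aug p + aug q := act_add ..
lemma aug_one : aug (1 : R d) = 1 := act_one ..
lemma aug_mul (p q : R d) : aug (p * q) = aug p * aug q := by
  rw [aug, act_mul]
  have : (fun j => act q (fun _ => (1:ℝ)) j) = fun _ : G d => aug q := by
    funext j; rw [act_const]; ring
  rw [this, act_const, mul_comm, aug]
lemma aug_pow (q : R d) (n : ℕ) : aug (q ^ n) = aug q ^ n := by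
  induction n with
  | zero => simpa using aug_one
  | succ n ih => rw [pow_succ, pow_succ, aug_mul, ih]
lemma aug_sum {α : Type*} (s : Finset α) (q : α → R d) :
    aug (∑ a ∈ s, q a) = ∑ a ∈ s, aug (q a) := act_sum ..

lemma act_natCast (c : ℕ) (w : G d → ℝ) (i : G d) : act (c : R d) w i = c * w i := by
  rw [AddMonoidAlgebra.natCast_def, act_single]; simp




lemma choose_step {m t : ℕ} (h : 2*(t+1) ≤ m+1) : m.choose t ≤ m.choose (t+1) := by
  have h1 : m.choose (t+1) * (t+1) = m.choose t * (m - t) := Nat.choose_succ_right_eq m t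
  have h2 : t + 1 ≤ m - t := by omega
  have h3 : m.choose t * (t+1) ≤ m.choose (t+1) * (t+1) := by
    rw [h1]
    exact Nat.mul_le_mul_left _ h2
  exact Nat.le_of_mul_le_mul_right h3 (Nat.succ_pos t)

lemma choose_down {m j : ℕ} (h : m+1 ≤ 2*(j+1)) (hj : j + 1 ≤ m) :
    m.choose (j+1) ≤ m.choose j := by
  have e1 : m.choose (j+1) = m.choose (m - (j+1)) := (Nat.choose_symm (by omega)).symm
  have e2 : m.choose j = m.choose (m - j) := (Nat.choose_symm (by omega)).symm
  have e3 : m - j = (m - (j+1)) + 1 := by omega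
  rw [e1, e2, e3]
  exact choose_step (by omega)

lemma choose_half : ∀ m : ℕ, m.choose ((m+1)/2) = m.choose (m/2) := by
  intro m
  rcases Nat.even_or_odd m with ⟨t, ht⟩ | ⟨t, ht⟩
  · subst ht; congr 1; omega
  · subst ht
    have h1 : (2*t+1+1)/2 = t+1 := by omega
    have h2 : (2*t+1)/2 = t := by omega
    rw [h1, h2]
    have := Nat.choose_symm (n := 2*t+1) (k := t+1) (by omega)
    have h3 : 2*t+1 - (t+1) = t := by omega
    rw [h3] at this
    exact this.symm

lemma abel_bound (m : ℕ) (w : ℕ → ℝ) (M : ℝ) (hw : ∀ j, |w j| ≤ M) :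
    |∑ j ∈ range (m+1), (m.choose j : ℝ) * (w (j+1) - w j)| ≤
      2 * (m.choose (m/2) : ℝ) * M := by
  have hM : 0 ≤ M := le_trans (abs_nonneg _) (hw 0)
  set a : ℕ → ℝ := fun j => (m.choose j : ℝ) with ha
  have hT : ∑ j ∈ range (m+1), a j * (w (j+1) - w j)
      = a m * w (m+1) - a 0 * w 0 + ∑ j ∈ range m, (a j - a (j+1)) * w (j+1) := by
    have e1 : ∑ j ∈ range (m+1), a j * w (j+1)
        = a m * w (m+1) + ∑ j ∈ range m, a j * w (j+1) := by
      rw [Finset.sum_range_succ]; ring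
    have e2 : ∑ j ∈ range (m+1), a j * w j
        = a 0 * w 0 + ∑ j ∈ range m, a (j+1) * w (j+1) := by
      rw [Finset.sum_range_succ']; ring
    have : ∑ j ∈ range (m+1), a j * (w (j+1) - w j)
        = ∑ j ∈ range (m+1), a j * w (j+1) - ∑ j ∈ range (m+1), a j * w j := by
      rw [← Finset.sum_sub_distrib]
      exact Finset.sum_congr rfl fun j _ => by ring
    have e3 : ∑ j ∈ range m, a j * w (j+1) - ∑ j ∈ range m, a (j+1) * w (j+1)
        = ∑ j ∈ range m, (a j - a (j+1)) * w (j+1) := by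
      rw [← Finset.sum_sub_distrib]
      exact Finset.sum_congr rfl fun j _ => by ring
    rw [this, e1, e2]
    linear_combination e3
  rcases Nat.eq_zero_or_pos m with rfl | hm
  · rw [hT]
    simp only [Finset.range_zero, Finset.sum_empty, add_zero]
    have : (Nat.choose 0 0 : ℝ) = 1 := by norm_num
    simp only [ha]
    norm_num
    calc |w 1 - w 0| ≤ |w 1| + |w 0| := abs_sub _ _
      _ ≤ M + M := add_le_add (hw 1) (hw 0)
      _ = 2 * M := by ring
  -- m ≥ 1
  set h : ℕ := (m+1)/2 with hh
  have hhm : h ≤ m := by omega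
  have habs : ∑ j ∈ range m, |a j - a (j+1)| = 2 * a h - a 0 - a m := by
    have hsplit : ∑ j ∈ range m, |a j - a (j+1)|
        = ∑ j ∈ range h, |a j - a (j+1)| + ∑ j ∈ Ico h m, |a j - a (j+1)| := by
      have := (Finset.sum_Ico_consecutive (fun j => |a j - a (j+1)|) (Nat.zero_le h) hhm).symm
      simpa only [← Finset.range_eq_Ico] using this
    have r1 : ∑ j ∈ range h, |a j - a (j+1)| = a h - a 0 := by
      have : ∀ j ∈ range h, |a j - a (j+1)| = a (j+1) - a j := by
        intro j hj
        rw [Finset.mem_range] at hj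
        have : m.choose j ≤ m.choose (j+1) := choose_step (by omega)
        rw [abs_of_nonpos (sub_nonpos.mpr (Nat.cast_le.mpr this))]
        ring
      rw [Finset.sum_congr rfl this, Finset.sum_range_sub]
    have r2 : ∑ j ∈ Ico h m, |a j - a (j+1)| = a h - a m := by
      have : ∀ j ∈ Ico h m, |a j - a (j+1)| = a j - a (j+1) := by
        intro j hj
        rw [Finset.mem_Ico] at hj
        have : m.choose (j+1) ≤ m.choose j := choose_down (by omega) (by omega)
        rw [abs_of_nonneg (sub_nonneg.mpr (Nat.cast_le.mpr this))]
      rw [Finset.sum_congr rfl this]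
      have t1 : ∑ j ∈ range m, (a j - a (j+1)) = a 0 - a m := Finset.sum_range_sub' a m
      have t2 : ∑ j ∈ range h, (a j - a (j+1)) = a 0 - a h := Finset.sum_range_sub' a h
      have t3 := Finset.sum_Ico_eq_sub (fun j => a j - a (j+1)) hhm
      rw [t3, t1, t2]; ring
    rw [hsplit, r1, r2]; ring
  have key : |∑ j ∈ range (m+1), a j * (w (j+1) - w j)|
      ≤ (a m + a 0 + (2 * a h - a 0 - a m)) * M := by
    rw [hT]
    calc |a m * w (m+1) - a 0 * w 0 + ∑ j ∈ range m, (a j - a (j+1)) * w (j+1)|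
        ≤ |a m * w (m+1)| + |a 0 * w 0| + |∑ j ∈ range m, (a j - a (j+1)) * w (j+1)| := by
          exact (abs_add_le _ _).trans (add_le_add_left (abs_sub _ _) _)
      _ ≤ a m * M + a 0 * M + ∑ j ∈ range m, |a j - a (j+1)| * M := by
          gcongr
          · rw [abs_mul, abs_of_nonneg (by positivity : (0:ℝ) ≤ a m)]
            exact mul_le_mul_of_nonneg_left (hw _) (by positivity)
          · rw [abs_mul, abs_of_nonneg (by positivity : (0:ℝ) ≤ a 0)]
            exact mul_le_mul_of_nonneg_left (hw _) (by positivity)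
          · refine (Finset.abs_sum_le_sum_abs _ _).trans (Finset.sum_le_sum fun j _ => ?_)
            rw [abs_mul]
            exact mul_le_mul_of_nonneg_left (hw _) (abs_nonneg _)
      _ = (a m + a 0 + ∑ j ∈ range m, |a j - a (j+1)|) * M := by rw [← Finset.sum_mul]; ring
      _ = (a m + a 0 + (2 * a h - a 0 - a m)) * M := by rw [habs]
  have : a h = (m.choose (m/2) : ℝ) := by
    simp only [ha, hh]
    exact_mod_cast congrArg (Nat.cast (R := ℝ)) (choose_half m)
  calc |∑ j ∈ range (m+1), (m.choose j : ℝ) * (w (j+1) - w j)|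
      ≤ (a m + a 0 + (2 * a h - a 0 - a m)) * M := key
    _ = 2 * a h * M := by ring
    _ = 2 * (m.choose (m/2) : ℝ) * M := by rw [this]




lemma chooseid (t : ℕ) :
    Nat.choose (2*t+2) (t+1) * ((t+1)*(t+1)) = (2*t+2)*(2*t+1)*Nat.choose (2*t) t := by
  have h1 : (2*t+2) * Nat.choose (2*t+1) t = Nat.choose (2*t+2) (t+1) * (t+1) :=
    Nat.add_one_mul_choose_eq (2*t+1) t
  have h2 : (2*t+1) * Nat.choose (2*t) t = Nat.choose (2*t+1) (t+1) * (t+1) :=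
    Nat.add_one_mul_choose_eq (2*t) t
  have h3 : Nat.choose (2*t+1) t = Nat.choose (2*t+1) (t+1) := by
    have := Nat.choose_symm (n := 2*t+1) (k := t+1) (by omega)
    have h4 : 2*t+1 - (t+1) = t := by omega
    rw [h4] at this
    exact this
  calc Nat.choose (2*t+2) (t+1) * ((t+1)*(t+1))
      = (Nat.choose (2*t+2) (t+1) * (t+1)) * (t+1) := by ring
    _ = ((2*t+2) * Nat.choose (2*t+1) t) * (t+1) := by rw [h1]
    _ = (2*t+2) * (Nat.choose (2*t+1) (t+1) * (t+1)) := by rw [h3]; ring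
    _ = (2*t+2) * ((2*t+1) * Nat.choose (2*t) t) := by rw [← h2]
    _ = (2*t+2)*(2*t+1)*Nat.choose (2*t) t := by ring

lemma central_even : ∀ t : ℕ, (Nat.choose (2*t) t)^2 * (3*t+1) ≤ 16^t := by
  intro t
  induction t with
  | zero => simp
  | succ t ih =>
    have hk := chooseid t
    set C := Nat.choose (2*t) t with hC
    set C' := Nat.choose (2*t+2) (t+1) with hC'
    have hpoly : (2*t+1)^2*(3*t+4) ≤ 4*(t+1)^2*(3*t+1) := by nlinarith
    have main : C'^2 * (3*t+4) * ((t+1)*(t+1))^2 ≤ 16^(t+1) * ((t+1)*(t+1))^2 := by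
      calc C'^2 * (3*t+4) * ((t+1)*(t+1))^2
          = (C' * ((t+1)*(t+1)))^2 * (3*t+4) := by ring
        _ = ((2*t+2)*(2*t+1)*C)^2 * (3*t+4) := by rw [hk]
        _ = (2*t+2)^2 * C^2 * ((2*t+1)^2*(3*t+4)) := by ring
        _ ≤ (2*t+2)^2 * C^2 * (4*(t+1)^2*(3*t+1)) := Nat.mul_le_mul_left _ hpoly
        _ = (16 * ((t+1)*(t+1))^2) * (C^2*(3*t+1)) := by ring
        _ ≤ (16 * ((t+1)*(t+1))^2) * 16^t := Nat.mul_le_mul_left _ ih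
        _ = 16^(t+1) * ((t+1)*(t+1))^2 := by ring
    have hpos : 0 < ((t+1)*(t+1))^2 := by positivity
    have := Nat.le_of_mul_le_mul_right main hpos
    calc (Nat.choose (2*(t+1)) (t+1))^2 * (3*(t+1)+1)
        = C'^2 * (3*t+4) := by
          rw [show 2*(t+1) = 2*t+2 from by ring, show 3*(t+1)+1 = 3*t+4 from by ring]
      _ ≤ 16^(t+1) := this

lemma phi_sq (m : ℕ) : (Nat.choose m (m/2))^2 * (m+1) ≤ 4^m := by
  rcases Nat.even_or_odd m with ⟨t, ht⟩ | ⟨t, ht⟩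
  · have h2 : m = 2*t := by omega
    subst h2
    have hdiv : 2*t/2 = t := by omega
    rw [hdiv]
    calc (Nat.choose (2*t) t)^2 * (2*t+1) ≤ (Nat.choose (2*t) t)^2 * (3*t+1) :=
          Nat.mul_le_mul_left _ (by omega)
      _ ≤ 16^t := central_even t
      _ = 4^(2*t) := by rw [pow_mul]; norm_num
  · subst ht
    have hdiv : (2*t+1)/2 = t := by omega
    rw [hdiv]
    -- C(2t+2,t+1) = 2 * C(2t+1,t)
    have h1 : (2*t+2) * Nat.choose (2*t+1) t = Nat.choose (2*t+2) (t+1) * (t+1) :=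
      Nat.add_one_mul_choose_eq (2*t+1) t
    have h2 : Nat.choose (2*t+2) (t+1) = 2 * Nat.choose (2*t+1) t := by
      have : (2 * Nat.choose (2*t+1) t) * (t+1) = Nat.choose (2*t+2) (t+1) * (t+1) := by
        rw [← h1]; ring
      exact (Nat.eq_of_mul_eq_mul_right (Nat.succ_pos t) this).symm
    have h3 : 4 * ((Nat.choose (2*t+1) t)^2 * (2*t+1+1)) ≤ 4 * 4^(2*t+1) := by
      calc 4 * ((Nat.choose (2*t+1) t)^2 * (2*t+1+1))
          = (Nat.choose (2*t+2) (t+1))^2 * (2*t+2) := by rw [h2]; ring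
        _ ≤ (Nat.choose (2*t+2) (t+1))^2 * (3*t+4) := Nat.mul_le_mul_left _ (by omega)
        _ = (Nat.choose (2*(t+1)) (t+1))^2 * (3*(t+1)+1) := by
          rw [show 2*(t+1) = 2*t+2 from by ring, show 3*(t+1)+1 = 3*t+4 from by ring]
        _ ≤ 16^(t+1) := central_even (t+1)
        _ = 4 * 4^(2*t+1) := by
          have : 16^(t+1) = 4^(2*(t+1)) := by rw [pow_mul]; norm_num
          rw [this]; rw [show 2*(t+1) = (2*t+1)+1 by omega, pow_succ]; ring
    exact Nat.le_of_mul_le_mul_left h3 (by norm_num)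



/-- unit vector -/
def uv (d : ℕ) (f : Fin d) : G d := Pi.single f 1

set_option maxHeartbeats 1600000 in
lemma step (d : ℕ) (hd : 0 < d) (A : G d → ℝ) (M : ℝ) (hbdd : ∀ i, |A i| ≤ M)
    (hharm2 : ∀ i : G d,
      ∑ e : Fin d, (A (i + uv d e) + A (i + -(uv d e))) = 2*(d:ℝ)*A i)
    (e : Fin d) (i : G d) : A (i + uv d e) = A i := by
  classical
  have hM : 0 ≤ M := le_trans (abs_nonneg _) (hbdd 0)
  set Ud : Fin d → R d := fun f =>
    AddMonoidAlgebra.single (0 : G d) (2:ℝ) + AddMonoidAlgebra.single (uv d f) 1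
      + AddMonoidAlgebra.single (-(uv d f)) 1 with hUd
  set L : R d := ∑ f : Fin d, Ud f with hL
  have hactU : ∀ f (j : G d), act (Ud f) A j = 2*A j + (A (j + uv d f) + A (j + -(uv d f))) := by
    intro f j
    rw [hUd]
    rw [act_add, act_add, act_single, act_single, act_single]
    rw [add_zero]
    ring
  have hactL : ∀ j, act L A j = (4*(d:ℝ)) * A j := by
    intro j
    rw [hL, act_sum]
    simp only [hactU]
    rw [Finset.sum_add_distrib, hharm2 j, Finset.sum_const, Finset.card_univ, Fintype.card_fin]
    push_cast
    ring
  have hpow : ∀ n (j : G d), act (L^n) A j = (4*(d:ℝ))^n * A j := by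
    intro n
    induction n with
    | zero => intro j; rw [pow_zero, act_one, pow_zero, one_mul]
    | succ n ih =>
      intro j
      rw [pow_succ', act_mul]
      have : (fun j' => act (L^n) A j') = fun j' => (4*(d:ℝ))^n * A j' := funext ih
      rw [this, act_smul_w, hactL]
      ring
  -- factorization
  set δ : R d := AddMonoidAlgebra.single (uv d e) (1:ℝ) with hδ
  set P : R d := 1 + δ with hP
  set δ' : R d := AddMonoidAlgebra.single (-(uv d e)) (1:ℝ) with hδ'
  set Q : R d := 1 + δ' with hQ
  have hPQ : P * Q = Ud e := by
    rw [hP, hQ, hδ, hδ']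
    simp only [hUd]
    rw [mul_add, mul_one, add_mul, one_mul, AddMonoidAlgebra.single_mul_single,
      add_neg_cancel, mul_one, AddMonoidAlgebra.one_def,
      show (2:ℝ) = 1+1 from by norm_num, AddMonoidAlgebra.single_add]
    abel
  set W : R d := ∑ f ∈ Finset.univ.erase e, Ud f with hW
  have hLW : L = P * Q + W := by
    rw [hPQ, hL, hW]
    exact (Finset.add_sum_erase _ _ (Finset.mem_univ e)).symm
  -- positivity and mass facts
  have hKU : ∀ f, Kpos (Ud f) := by
    intro f
    rw [hUd]
    exact Kpos_add (Kpos_add (Kpos_single _ (by norm_num)) (Kpos_single _ (by norm_num)))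
      (Kpos_single _ (by norm_num))
  have haugU : ∀ f, aug (Ud f) = 4 := by
    intro f
    simp only [hUd]
    rw [aug_add, aug_add, aug_single, aug_single, aug_single]
    norm_num
  have hKQ : Kpos Q := by
    rw [hQ, hδ']
    exact Kpos_add Kpos_one (Kpos_single _ (by norm_num))
  have haugQ : aug Q = 2 := by
    rw [hQ, hδ', aug_add, aug_one, aug_single]
    norm_num
  have hKW : Kpos W := by
    rw [hW]
    exact Kpos_sum _ _ fun f _ => hKU f
  have haugW : aug W = 4*((d:ℝ)-1) := by
    rw [hW, aug_sum]
    rw [Finset.sum_congr rfl fun f _ => haugU f, Finset.sum_const,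
      Finset.card_erase_of_mem (Finset.mem_univ e), Finset.card_univ, Fintype.card_fin]
    rw [nsmul_eq_mul, Nat.cast_sub (by omega), Nat.cast_one]
    ring
  have hdR : (1:ℝ) ≤ (d:ℝ) := by exact_mod_cast hd
  set X : ℝ := 4*((d:ℝ)-1) with hX
  have hXnn : 0 ≤ X := by rw [hX]; linarith
  -- the key bound for each n
  have keybound : ∀ n : ℕ, (A (i + uv d e) - A i)^2 * ((n:ℝ)+1) ≤ 4*M^2*(d:ℝ) := by
    intro n
    -- bound on the averaged functions
    have hBb : ∀ (m : ℕ) (j : G d),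
        |act (Q^m * W^(n-m)) A j| ≤ 2^m * X^(n-m) * M := by
      intro m j
      have hpos := Kpos_mul (Kpos_pow hKQ m) (Kpos_pow hKW (n-m))
      have h := abs_act_le _ hpos A M hbdd j
      rwa [aug_mul, aug_pow, aug_pow, haugQ, haugW] at h
    -- binomial expansion of P^m
    have hPm : ∀ m : ℕ, P^m = ∑ t ∈ Finset.range (m+1),
        (AddMonoidAlgebra.single ((t • uv d e : G d)) ((m.choose t : ℝ)) : R d) := by
      intro m
      rw [hP, add_comm, add_pow]
      refine Finset.sum_congr rfl fun t ht => ?_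
      rw [one_pow, mul_one, hδ, AddMonoidAlgebra.single_pow, one_pow,
        AddMonoidAlgebra.natCast_def, AddMonoidAlgebra.single_mul_single, add_zero, one_mul]
    have hg : ∀ (m : ℕ) (B : G d → ℝ) (j : G d), act (P^m) B j
        = ∑ t ∈ Finset.range (m+1), (m.choose t : ℝ) * B (j + t • uv d e) := by
      intro m B j
      rw [hPm m, act_sum]
      exact Finset.sum_congr rfl fun t _ => act_single ..
    -- per-term bound
    have hdiff : ∀ m : ℕ,
        |act ((δ - 1) * P^m) (fun j => act (Q^m * W^(n-m)) A j) i|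
          ≤ 2*(m.choose (m/2):ℝ)*(2^m * X^(n-m) * M) := by
      intro m
      set B : G d → ℝ := fun j => act (Q^m * W^(n-m)) A j with hB
      have h1 : act ((δ - 1) * P^m) B i
          = act (P^m) B (i + uv d e) - act (P^m) B i := by
        rw [act_mul, act_sub, hδ, act_single, act_one, one_mul]
      set w : ℕ → ℝ := fun t => B (i + t • uv d e) with hw
      have h2 : act (P^m) B (i + uv d e) - act (P^m) B i
          = ∑ t ∈ Finset.range (m+1), (m.choose t : ℝ) * (w (t+1) - w t) := by
        rw [hg, hg, ← Finset.sum_sub_distrib]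
        refine Finset.sum_congr rfl fun t ht => ?_
        have harg : i + uv d e + t • uv d e = i + (t+1) • uv d e := by
          rw [succ_nsmul]; abel
        rw [hw]
        simp only []
        rw [harg]
        ring
      have h3 := abel_bound m w (2^m * X^(n-m) * M) (fun t => hBb m _)
      rw [h1, h2]
      exact h3
    -- the two evaluations of act ((δ-1) * L^n) A i
    have lhs : act ((δ - 1) * L^n) A i
        = (4*(d:ℝ))^n * (A (i + uv d e) - A i) := by
      rw [act_mul, act_sub, hδ, act_single, act_one, one_mul]
      rw [hpow, hpow]
      ring
    have rhs : act ((δ - 1) * L^n) A i = ∑ m ∈ Finset.range (n+1),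
        (n.choose m : ℝ) * act ((δ - 1) * P^m) (fun j => act (Q^m * W^(n-m)) A j) i := by
      have hexp : (δ - 1) * L^n = ∑ m ∈ Finset.range (n+1),
          ((n.choose m : R d) * (((δ - 1) * P^m) * (Q^m * W^(n-m)))) := by
        rw [hLW, add_pow, Finset.mul_sum]
        refine Finset.sum_congr rfl fun m hm => ?_
        rw [mul_pow]
        ring
      rw [hexp, act_sum]
      refine Finset.sum_congr rfl fun m hm => ?_
      rw [act_mul, act_natCast, act_mul]
    -- summing the bounds
    have hsumbound : (4*(d:ℝ))^n * |A (i + uv d e) - A i|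
        ≤ ∑ m ∈ Finset.range (n+1),
            (n.choose m : ℝ) * (2*(m.choose (m/2):ℝ)*(2^m * X^(n-m) * M)) := by
      have h4 : |(4*(d:ℝ))^n * (A (i + uv d e) - A i)|
          = (4*(d:ℝ))^n * |A (i + uv d e) - A i| := by
        rw [abs_mul, abs_of_nonneg (by positivity)]
      rw [← h4, ← lhs, rhs]
      refine (Finset.abs_sum_le_sum_abs _ _).trans (Finset.sum_le_sum fun m hm => ?_)
      rw [abs_mul, abs_of_nonneg (by positivity : (0:ℝ) ≤ (n.choose m : ℝ))]
      exact mul_le_mul_of_nonneg_left (hdiff m) (by positivity)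
    -- analytic estimates
    set a : ℕ → ℝ := fun m => (n.choose m:ℝ) * 4^m * X^(n-m) with haa
    set φ : ℕ → ℝ := fun m => (m.choose (m/2):ℝ) / 2^m with hφ
    have han : ∀ m, 0 ≤ a m := fun m => by
      simp only [haa]; positivity
    have hφn : ∀ m, 0 ≤ φ m := fun m => by
      simp only [hφ]; positivity
    have hterm : ∀ m, (n.choose m:ℝ)*(2*(m.choose (m/2):ℝ)*(2^m * X^(n-m) * M))
        = 2*M*(a m * φ m) := by
      intro m
      simp only [haa, hφ]
      have h4 : (4:ℝ)^m = 2^m * 2^m := by rw [← mul_pow]; norm_num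
      rw [h4]
      have h2m : (2:ℝ)^m ≠ 0 := by positivity
      field_simp
    set S : ℝ := ∑ m ∈ Finset.range (n+1), a m * φ m with hS
    have hS1 : (4*(d:ℝ))^n * |A (i + uv d e) - A i| ≤ 2*M*S := by
      refine hsumbound.trans ?_
      rw [hS, Finset.mul_sum]
      exact le_of_eq (Finset.sum_congr rfl fun m _ => hterm m)
    have hSnn : 0 ≤ S := by
      rw [hS]
      exact Finset.sum_nonneg fun m _ => mul_nonneg (han m) (hφn m)
    have hsuma : ∑ m ∈ Finset.range (n+1), a m = (4*(d:ℝ))^n := by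
      have h5 : (4:ℝ) + X = 4*(d:ℝ) := by rw [hX]; ring
      rw [← h5, add_pow]
      refine Finset.sum_congr rfl fun m hm => ?_
      simp only [haa]
      ring
    have hφsq : ∀ m : ℕ, φ m ^ 2 ≤ 1/((m:ℝ)+1) := by
      intro m
      simp only [hφ]
      rw [div_pow, div_le_div_iff₀ (by positivity) (by positivity)]
      have h6 : ((2:ℝ)^m)^2 = 4^m := by rw [← pow_mul, show (4:ℝ) = 2^2 from by norm_num, ← pow_mul]; ring_nf
      rw [h6, one_mul]
      exact_mod_cast phi_sq m
    have hCS : S^2 ≤ (∑ m ∈ Finset.range (n+1), a m)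
        * (∑ m ∈ Finset.range (n+1), a m * φ m ^ 2) := by
      have h7 := Finset.sum_mul_sq_le_sq_mul_sq (Finset.range (n+1))
        (fun m => Real.sqrt (a m)) (fun m => Real.sqrt (a m) * φ m)
      have e1 : ∑ m ∈ Finset.range (n+1), Real.sqrt (a m) * (Real.sqrt (a m) * φ m)
          = S := by
        rw [hS]
        refine Finset.sum_congr rfl fun m _ => ?_
        rw [← mul_assoc, Real.mul_self_sqrt (han m)]
      have e2 : ∑ m ∈ Finset.range (n+1), (Real.sqrt (a m))^2
          = ∑ m ∈ Finset.range (n+1), a m :=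
        Finset.sum_congr rfl fun m _ => Real.sq_sqrt (han m)
      have e3 : ∑ m ∈ Finset.range (n+1), (Real.sqrt (a m) * φ m)^2
          = ∑ m ∈ Finset.range (n+1), a m * φ m ^ 2 :=
        Finset.sum_congr rfl fun m _ => by rw [mul_pow, Real.sq_sqrt (han m)]
      rw [e1, e2, e3] at h7
      exact h7
    have htail : ∑ m ∈ Finset.range (n+1), a m * φ m ^ 2
        ≤ (d:ℝ) * (4*(d:ℝ))^n / ((n:ℝ)+1) := by
      have t1 : ∑ m ∈ Finset.range (n+1), a m * φ m ^ 2
          ≤ ∑ m ∈ Finset.range (n+1), a m * (1/((m:ℝ)+1)) :=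
        Finset.sum_le_sum fun m _ => mul_le_mul_of_nonneg_left (hφsq m) (han m)
      have t2 : ∀ m : ℕ, a m * (1/((m:ℝ)+1))
          = (1/((n:ℝ)+1)) * ((n+1).choose (m+1) : ℝ) * 4^m * X^(n-m) := by
        intro m
        have hid : ((n:ℝ)+1) * (n.choose m : ℝ)
            = ((n+1).choose (m+1) : ℝ) * ((m:ℝ)+1) := by
          exact_mod_cast congrArg (Nat.cast (R := ℝ)) (Nat.add_one_mul_choose_eq n m)
        simp only [haa]
        have hm1 : ((m:ℝ)+1) ≠ 0 := by positivity
        have hn1 : ((n:ℝ)+1) ≠ 0 := by positivity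
        field_simp
        linear_combination X^(n-m) * hid
      have t3 : ∑ m ∈ Finset.range (n+1),
          ((n+1).choose (m+1) : ℝ) * 4^m * X^(n-m) ≤ (d:ℝ) * (4*(d:ℝ))^n := by
        have h8 : (4*(d:ℝ))^(n+1) = ∑ j ∈ Finset.range (n+2),
            (4:ℝ)^j * X^(n+1-j) * ((n+1).choose j : ℝ) := by
          rw [show 4*(d:ℝ) = 4 + X from by rw [hX]; ring, add_pow]
        have h9 : ∑ j ∈ Finset.range (n+2), (4:ℝ)^j * X^(n+1-j) * ((n+1).choose j : ℝ)
            = (∑ m ∈ Finset.range (n+1), (4:ℝ)^(m+1) * X^(n-m) * ((n+1).choose (m+1) : ℝ))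
              + X^(n+1) := by
          rw [Finset.sum_range_succ']
          congr 1
          · refine Finset.sum_congr rfl fun m hm => ?_
            rw [show n+1-(m+1) = n-m from by omega]
          · norm_num
        have h10 : 4 * ∑ m ∈ Finset.range (n+1), ((n+1).choose (m+1) : ℝ) * 4^m * X^(n-m)
            ≤ (4*(d:ℝ))^(n+1) := by
          rw [h8, h9, Finset.mul_sum]
          have : ∀ m ∈ Finset.range (n+1),
              4 * (((n+1).choose (m+1) : ℝ) * 4^m * X^(n-m))
                = (4:ℝ)^(m+1) * X^(n-m) * ((n+1).choose (m+1) : ℝ) := by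
            intro m _
            rw [pow_succ]
            ring
          rw [Finset.sum_congr rfl this]
          nlinarith [pow_nonneg hXnn (n+1)]
        have h11 : (4*(d:ℝ))^(n+1) = 4 * ((d:ℝ) * (4*(d:ℝ))^n) := by
          rw [pow_succ]
          ring
        nlinarith [h10]
      calc ∑ m ∈ Finset.range (n+1), a m * φ m ^ 2
          ≤ ∑ m ∈ Finset.range (n+1), a m * (1/((m:ℝ)+1)) := t1
        _ = (1/((n:ℝ)+1)) * ∑ m ∈ Finset.range (n+1),
              ((n+1).choose (m+1) : ℝ) * 4^m * X^(n-m) := by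
            rw [Finset.mul_sum]
            exact Finset.sum_congr rfl fun m _ => by rw [t2 m]; ring
        _ ≤ (1/((n:ℝ)+1)) * ((d:ℝ) * (4*(d:ℝ))^n) := by
            refine mul_le_mul_of_nonneg_left t3 (by positivity)
        _ = (d:ℝ) * (4*(d:ℝ))^n / ((n:ℝ)+1) := by ring
    -- finish
    set K : ℝ := (4*(d:ℝ))^n with hK
    have hKpos : 0 < K := by
      rw [hK]
      exact pow_pos (by linarith) n
    have hn1 : (0:ℝ) < (n:ℝ)+1 := by positivity
    have hS2 : S^2 ≤ K^2 * (d:ℝ) / ((n:ℝ)+1) := by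
      calc S^2 ≤ (∑ m ∈ Finset.range (n+1), a m)
          * (∑ m ∈ Finset.range (n+1), a m * φ m ^ 2) := hCS
        _ ≤ K * ((d:ℝ) * K / ((n:ℝ)+1)) := by
            rw [hsuma]
            exact mul_le_mul_of_nonneg_left htail (le_of_lt hKpos)
        _ = K^2 * (d:ℝ) / ((n:ℝ)+1) := by ring
    have habs2 : (K * |A (i + uv d e) - A i|)^2 ≤ (2*M*S)^2 :=
      pow_le_pow_left₀ (by positivity) hS1 2
    have h12 : K^2 * ((A (i + uv d e) - A i)^2) ≤ 4*M^2*(K^2 * (d:ℝ) / ((n:ℝ)+1)) := by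
      have : (K * |A (i + uv d e) - A i|)^2 = K^2 * ((A (i + uv d e) - A i)^2) := by
        rw [mul_pow, sq_abs]
      rw [this] at habs2
      refine habs2.trans ?_
      have : (2*M*S)^2 = 4*M^2*S^2 := by ring
      rw [this]
      exact mul_le_mul_of_nonneg_left hS2 (by positivity)
    have h13 : K^2 * ((A (i + uv d e) - A i)^2 * ((n:ℝ)+1)) ≤ K^2 * (4*M^2*(d:ℝ)) := by
      have h14 : K^2 * ((A (i + uv d e) - A i)^2) * ((n:ℝ)+1)
          ≤ 4*M^2*(K^2 * (d:ℝ) / ((n:ℝ)+1)) * ((n:ℝ)+1) :=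
        mul_le_mul_of_nonneg_right h12 (le_of_lt hn1)
      have h15 : 4*M^2*(K^2 * (d:ℝ) / ((n:ℝ)+1)) * ((n:ℝ)+1) = K^2 * (4*M^2*(d:ℝ)) := by
        field_simp
      calc K^2 * ((A (i + uv d e) - A i)^2 * ((n:ℝ)+1))
          = K^2 * ((A (i + uv d e) - A i)^2) * ((n:ℝ)+1) := by ring
        _ ≤ 4*M^2*(K^2 * (d:ℝ) / ((n:ℝ)+1)) * ((n:ℝ)+1) := h14
        _ = K^2 * (4*M^2*(d:ℝ)) := h15
    exact le_of_mul_le_mul_left h13 (by positivity)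
  -- conclude from keybound
  by_contra hne
  have hc : A (i + uv d e) - A i ≠ 0 := sub_ne_zero.mpr hne
  have hc2 : 0 < (A (i + uv d e) - A i)^2 := by positivity
  obtain ⟨n, hn⟩ := exists_nat_gt (4*M^2*(d:ℝ)/(A (i + uv d e) - A i)^2)
  have hn2 : 4*M^2*(d:ℝ) < (A (i + uv d e) - A i)^2 * ((n:ℝ)+1) := by
    have h16 : 4*M^2*(d:ℝ)/(A (i + uv d e) - A i)^2 < (n:ℝ)+1 := by
      calc 4*M^2*(d:ℝ)/(A (i + uv d e) - A i)^2 < (n:ℝ) := hn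
        _ < (n:ℝ)+1 := by linarith
    calc 4*M^2*(d:ℝ)
        = (4*M^2*(d:ℝ)/(A (i + uv d e) - A i)^2) * (A (i + uv d e) - A i)^2 := by
          field_simp
      _ < ((n:ℝ)+1) * (A (i + uv d e) - A i)^2 :=
          mul_lt_mul_of_pos_right h16 hc2
      _ = (A (i + uv d e) - A i)^2 * ((n:ℝ)+1) := by ring
  linarith [keybound n]


lemma shift_int (d : ℕ) (hd : 0 < d) (A : G d → ℝ)
    (hstep : ∀ (e : Fin d) (i : G d), A (i + uv d e) = A i) :
    ∀ (e : Fin d) (z : ℤ) (i : G d), A (i + z • uv d e) = A i := by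
  intro e z
  induction z using Int.induction_on with
  | zero => intro i; simp
  | succ k ih =>
    intro i
    have h1 : i + ((k:ℤ)+1) • uv d e = (i + (k:ℤ) • uv d e) + uv d e := by
      rw [add_smul, one_smul]; abel
    rw [h1, hstep, ih]
  | pred k ih =>
    intro i
    have h1 : (i + (-(k:ℤ)-1) • uv d e) + uv d e = i + (-(k:ℤ)) • uv d e := by
      rw [sub_smul, one_smul]; abel
    calc A (i + (-(k:ℤ)-1) • uv d e)
        = A ((i + (-(k:ℤ)-1) • uv d e) + uv d e) := (hstep e _).symm
      _ = A (i + (-(k:ℤ)) • uv d e) := by rw [h1]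
      _ = A i := ih i

lemma translation (d : ℕ) (hd : 0 < d) (A : G d → ℝ)
    (hstep : ∀ (e : Fin d) (i : G d), A (i + uv d e) = A i) :
    ∀ (x i : G d), A (i + x) = A i := by
  have hz := shift_int d hd A hstep
  intro x i
  have hx : ∑ e : Fin d, (x e) • uv d e = x := by
    have h1 : ∀ e : Fin d, (x e) • uv d e = Pi.single e (x e) := by
      intro e
      funext j
      by_cases hj : j = e
      · subst hj; simp [uv, Pi.single_apply]
      · simp [uv, Pi.single_apply, hj]
    rw [Finset.sum_congr rfl fun e _ => h1 e]
    exact Finset.univ_sum_single x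
  have claim : ∀ s : Finset (Fin d), ∀ i : G d, A (i + ∑ e ∈ s, (x e) • uv d e) = A i := by
    intro s
    induction s using Finset.induction_on with
    | empty => intro i; simp
    | @insert a s has ih =>
      intro i
      rw [Finset.sum_insert has]
      have h2 : i + ((x a) • uv d a + ∑ e ∈ s, (x e) • uv d e)
          = (i + ∑ e ∈ s, (x e) • uv d e) + (x a) • uv d a := by abel
      rw [h2, hz a (x a), ih]
  have := claim Finset.univ i
  rwa [hx] at this

end DLiou


/-- Discrete Liouville theorem: a bounded discretely harmonic function on `ℤ^d` is
constant. -/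
theorem bounded_discrete_harmonic_is_constant
    (d : ℕ) (hd : 0 < d) (A : (Fin d → ℤ) → ℝ) (M : ℝ)
    (hbdd : ∀ i, |A i| ≤ M)
    (hharm : ∀ i, discreteLap d A i = 0) :
    ∀ i j, A i = A j := by
  classical
  have hup1 : ∀ (i : DLiou.G d) (e : Fin d),
      Function.update i e (i e + 1) = i + DLiou.uv d e := by
    intro i e
    funext j
    by_cases hj : j = e
    · subst hj; simp [DLiou.uv, Function.update_apply, Pi.single_apply]
    · simp [DLiou.uv, Function.update_apply, Pi.single_apply, hj]
  have hup2 : ∀ (i : DLiou.G d) (e : Fin d),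
      Function.update i e (i e - 1) = i + -(DLiou.uv d e) := by
    intro i e
    funext j
    by_cases hj : j = e
    · subst hj; simp [DLiou.uv, Function.update_apply, Pi.single_apply]; ring
    · simp [DLiou.uv, Function.update_apply, Pi.single_apply, hj]
  have hharm2 : ∀ i : DLiou.G d,
      ∑ e : Fin d, (A (i + DLiou.uv d e) + A (i + -(DLiou.uv d e))) = 2*(d:ℝ)*A i := by
    intro i
    have h := hharm i
    unfold discreteLap at h
    simp only [hup1 i, hup2 i] at h
    have h2 : ∑ e : Fin d, (A (i + DLiou.uv d e) + A (i + -(DLiou.uv d e)))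
        = (∑ e : Fin d, ((A (i + DLiou.uv d e) - A i) + (A (i + -(DLiou.uv d e)) - A i)))
          + ∑ _e : Fin d, 2*A i := by
      rw [← Finset.sum_add_distrib]
      exact Finset.sum_congr rfl fun e _ => by ring
    rw [h2, h, zero_add, Finset.sum_const, Finset.card_univ, Fintype.card_fin,
      nsmul_eq_mul]
    ring
  have hstep : ∀ (e : Fin d) (i : DLiou.G d), A (i + DLiou.uv d e) = A i :=
    DLiou.step d hd A M hbdd hharm2
  intro i j
  have := DLiou.translation d hd A hstep (j - i) i
  rw [show i + (j - i) = j from by abel] at this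
  exact this.symm
end

section
/- Let lambda > 0 and beta >= 1, and define V(F) = sup over mu > lambda of (1/mu) * ( lambda * (floor(F) - 2d) - log(beta) - max( log(2/(mu - lambda)), log(2e) ) ) for F >= 0. Then V is non-decreasing in F, and V(F) >= 0 for all F >= 0 sufficiently large; moreover there exists a constant C depending only on lambda, beta, d such that V(F) >= F - (1/lambda) * log(F) - C for all F > 1. -/
open Real

/-- Properties of the velocity lower bound
`V(F) = sup_{μ>λ} (1/μ)(λ(⌊F⌋ - 2d) - log β - max(log(2/(μ-λ)), log 2e))`:
it is non-decreasing on `[0,∞)`, eventually non-negative, and satisfies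
`V(F) ≥ F - (1/λ) log F - C` for `F > 1`. -/
theorem velocity_bound_properties (d : ℕ) (hd : 1 ≤ d) (lam β : ℝ)
    (hlam : 0 < lam) (hβ : 1 ≤ β) (V : ℝ → ℝ)
    (hV : ∀ F : ℝ, V F = sSup {v : ℝ | ∃ μ : ℝ, lam < μ ∧
      v = (1 / μ) * (lam * ((⌊F⌋ : ℝ) - 2 * d) - Real.log β -
        max (Real.log (2 / (μ - lam))) (Real.log (2 * Real.exp 1)))}) :
    MonotoneOn V (Set.Ici (0 : ℝ)) ∧
    (∃ F₀ : ℝ, ∀ F : ℝ, F₀ ≤ F → 0 ≤ V F) ∧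
    (∃ C : ℝ, ∀ F : ℝ, 1 < F → F - (1 / lam) * Real.log F - C ≤ V F) := by
  have he2 : (2:ℝ) ≤ Real.exp 1 := by
    have := Real.add_one_le_exp (1:ℝ); linarith
  have hlog2e : (0:ℝ) ≤ Real.log (2 * Real.exp 1) := Real.log_nonneg (by nlinarith)
  have hne : ∀ F : ℝ, {v : ℝ | ∃ μ : ℝ, lam < μ ∧
      v = (1 / μ) * (lam * ((⌊F⌋ : ℝ) - 2 * d) - Real.log β -
        max (Real.log (2 / (μ - lam))) (Real.log (2 * Real.exp 1)))}.Nonempty := by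
    intro F
    exact ⟨_, lam + 1, by linarith, rfl⟩
  have hbdd : ∀ F : ℝ, BddAbove {v : ℝ | ∃ μ : ℝ, lam < μ ∧
      v = (1 / μ) * (lam * ((⌊F⌋ : ℝ) - 2 * d) - Real.log β -
        max (Real.log (2 / (μ - lam))) (Real.log (2 * Real.exp 1)))} := by
    intro F
    refine ⟨max 0 ((lam * ((⌊F⌋ : ℝ) - 2 * d) - Real.log β) / lam), ?_⟩
    rintro v ⟨μ, hμ, rfl⟩
    have hμ0 : 0 < μ := hlam.trans hμ
    set A0 := lam * ((⌊F⌋ : ℝ) - 2 * d) - Real.log β with hA0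
    set M := max (Real.log (2 / (μ - lam))) (Real.log (2 * Real.exp 1)) with hMdef
    have hM0 : 0 ≤ M := le_trans hlog2e (le_max_right _ _)
    rcases le_or_gt (A0 - M) 0 with h | h
    · exact le_trans (mul_nonpos_of_nonneg_of_nonpos (by positivity) h) (le_max_left _ _)
    · have h1 : (1/μ) * (A0 - M) ≤ (1/lam) * (A0 - M) := by
        apply mul_le_mul_of_nonneg_right _ h.le
        exact one_div_le_one_div_of_le hlam hμ.le
      have h2 : (1/lam) * (A0 - M) ≤ (1/lam) * A0 := by
        apply mul_le_mul_of_nonneg_left (by linarith) (by positivity)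
      calc (1/μ)*(A0-M) ≤ (1/lam)*A0 := h1.trans h2
      _ = A0 / lam := one_div_mul_eq_div _ _
      _ ≤ _ := le_max_right _ _
  -- the key quantitative lower bound
  set K : ℝ := lam*(1+2*d) + Real.log β + Real.log (2*Real.exp 1) with hKdef
  have hK0 : 0 < K := by
    have hlβ : 0 ≤ Real.log β := Real.log_nonneg hβ
    have : 0 < lam*(1+2*d) := by positivity
    linarith
  have key : ∀ F : ℝ, 1 < F → F - (1/lam) * Real.log F - (K+1)/lam ≤ V F := by
    intro F hF
    have hF0 : 0 < F := by linarith
    set μ : ℝ := lam + 1/F with hμdef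
    have hμlam : lam < μ := by
      have : 0 < 1/F := by positivity
      simp only [hμdef]; linarith
    have hμ0 : 0 < μ := hlam.trans hμlam
    have hmem : (1/μ) * (lam * ((⌊F⌋ : ℝ) - 2 * d) - Real.log β -
        max (Real.log (2 / (μ - lam))) (Real.log (2 * Real.exp 1))) ∈
        {v : ℝ | ∃ μ' : ℝ, lam < μ' ∧
      v = (1 / μ') * (lam * ((⌊F⌋ : ℝ) - 2 * d) - Real.log β -
        max (Real.log (2 / (μ' - lam))) (Real.log (2 * Real.exp 1)))} := ⟨μ, hμlam, rfl⟩
    have hle := le_csSup (hbdd F) hmem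
    rw [← hV F] at hle
    refine le_trans ?_ hle
    -- simplify μ - lam
    have hsub : μ - lam = 1/F := by simp [hμdef]
    have h2F : 2 / (μ - lam) = 2 * F := by rw [hsub]; field_simp
    rw [h2F]
    set L := Real.log F with hL
    have hL0 : 0 ≤ L := Real.log_nonneg hF.le
    have hMle : max (Real.log (2*F)) (Real.log (2*Real.exp 1)) ≤ L + Real.log (2*Real.exp 1) := by
      apply max_le
      · rw [Real.log_mul two_ne_zero (ne_of_gt hF0)]
        have h2e : Real.log 2 ≤ Real.log (2*Real.exp 1) := by
          apply Real.log_le_log (by norm_num)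
          nlinarith
        linarith
      · linarith
    have hfloor : F - 1 ≤ (⌊F⌋:ℝ) := by
      have := Int.sub_one_lt_floor F
      linarith
    set A := lam * ((⌊F⌋ : ℝ) - 2 * d) - Real.log β -
        max (Real.log (2*F)) (Real.log (2*Real.exp 1)) with hAdef
    have hA : lam * F - L - K ≤ A := by
      have h1 : lam * (F - 1 - 2*d) ≤ lam * ((⌊F⌋:ℝ) - 2*d) := by
        apply mul_le_mul_of_nonneg_left (by linarith) hlam.le
      simp only [hAdef, hKdef]
      nlinarith [hMle]
    have hdivle : (lam * F - L - K)/μ ≤ A/μ := by gcongr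
    have hstep : F - (1/lam) * L - (K+1)/lam ≤ (lam * F - L - K)/μ := by
      rw [le_div_iff₀ hμ0]
      have expand : (F - (1/lam) * L - (K+1)/lam) * μ
          = lam * F - L - K - (L + K + 1)/(lam*F) := by
        simp only [hμdef]
        field_simp
        ring
      rw [expand]
      have : 0 ≤ (L + K + 1)/(lam*F) := by positivity
      linarith
    calc F - (1/lam) * L - (K+1)/lam ≤ (lam * F - L - K)/μ := hstep
      _ ≤ A/μ := hdivle
      _ = (1/μ) * A := (one_div_mul_eq_div _ _).symm
  refine ⟨?_, ?_, ⟨(K+1)/lam, key⟩⟩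
  · -- monotone
    intro F hF F' hF' hFF'
    rw [hV F, hV F']
    apply csSup_le (hne F)
    rintro v ⟨μ, hμ, rfl⟩
    have hμ0 : 0 < μ := hlam.trans hμ
    have hfl : (⌊F⌋:ℝ) ≤ (⌊F'⌋:ℝ) := by exact_mod_cast Int.floor_le_floor hFF'
    have h1 : (1/μ) * (lam * ((⌊F⌋ : ℝ) - 2 * d) - Real.log β -
        max (Real.log (2 / (μ - lam))) (Real.log (2 * Real.exp 1)))
        ≤ (1/μ) * (lam * ((⌊F'⌋ : ℝ) - 2 * d) - Real.log β -
        max (Real.log (2 / (μ - lam))) (Real.log (2 * Real.exp 1))) := by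
      apply mul_le_mul_of_nonneg_left _ (by positivity)
      have := mul_le_mul_of_nonneg_left (sub_le_sub_right hfl (2*(d:ℝ))) hlam.le
      linarith
    exact h1.trans (le_csSup (hbdd F') ⟨μ, hμ, rfl⟩)
  · -- eventual nonnegativity
    refine ⟨max 2 (max ((4/lam)^2) (2*((K+1)/lam))), fun F hF => ?_⟩
    have hF2 : (2:ℝ) ≤ F := le_trans (le_max_left _ _) hF
    have hF1 : 1 < F := by linarith
    have hF0 : 0 < F := by linarith
    have hFsq : (4/lam)^2 ≤ F := le_trans (le_trans (le_max_left _ _) (le_max_right _ _)) hF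
    have hFC : 2*((K+1)/lam) ≤ F := le_trans (le_trans (le_max_right _ _) (le_max_right _ _)) hF
    have hs : Real.sqrt F * Real.sqrt F = F := Real.mul_self_sqrt hF0.le
    have hs4 : 4/lam ≤ Real.sqrt F := by
      have h := Real.sqrt_le_sqrt hFsq
      rwa [Real.sqrt_sq (by positivity)] at h
    have hlogs : Real.log F ≤ 2 * Real.sqrt F := by
      have h1 : Real.log (Real.sqrt F) ≤ Real.sqrt F - 1 :=
        Real.log_le_sub_one_of_pos (Real.sqrt_pos.2 hF0)
      have h2 : Real.log (Real.sqrt F) = Real.log F / 2 := Real.log_sqrt hF0.le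
      linarith
    have hhalf : (1/lam) * Real.log F ≤ F/2 := by
      have h4 : 4 ≤ lam * Real.sqrt F := by
        have := mul_le_mul_of_nonneg_left hs4 hlam.le
        rw [mul_div_cancel₀ _ (ne_of_gt hlam)] at this
        linarith
      have h5 : 4 * Real.sqrt F ≤ lam * F := by
        nlinarith [Real.sqrt_nonneg F]
      have h6 : Real.log F ≤ 2 * Real.sqrt F := hlogs
      have h7 : Real.log F ≤ lam * F / 2 := by linarith
      have h8 := mul_le_mul_of_nonneg_left h7 (le_of_lt (show (0:ℝ) < 1/lam by positivity))
      have h9 : (1/lam) * (lam * F / 2) = F/2 := by field_simp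
      linarith
    have := key F hF1
    linarith
end
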